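/- Let n ≥ 3 and let A be a commutative unital C*-algebra over ℂ. Suppose that for every commutative star-subalgebra S of M_n(ℂ) (a StarSubalgebra of Matrix (Fin n) (Fin n) ℂ whose elements pairwise commute) we are given a unital star-algebra homomorphism φ_S : S → A, such that whenever S ≤ T (with T also commutative) the restriction of φ_T to S equals φ_S. Then 0 = 1 in A (i.e., A is the trivial C*-algebra). -/

import Mathlib

set_option linter.unusedSectionVars false
set_option maxHeartbeats 1000000

open Matrix

section KS
variable {n : ℕ} {A : Type*} [NormedCommRing A] [StarRing A] [CStarRing A]
  [NormedAlgebra ℂ A] [StarModule ℂ A] [CompleteSpace A]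

abbrev KSMat (n : ℕ) := Matrix (Fin n) (Fin n) ℂ

theorem ks_adjoin_comm (s : Set (KSMat n)) (hcomm : ∀ a ∈ s, ∀ b ∈ s, a * b = b * a)
    (hstar : ∀ a ∈ s, star a = a) :
    ∀ a ∈ StarAlgebra.adjoin ℂ s, ∀ b ∈ StarAlgebra.adjoin ℂ s, a * b = b * a := by
  have hsub : s ∪ star s ⊆ s := by
    rintro z (hz | hz)
    · exact hz
    · have h' : star z ∈ s := Set.mem_star.mp hz
      have h2 := hstar _ h'
      rw [star_star] at h2
      rwa [← h2] at h'
  intro a ha b hb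
  have h1 := StarAlgebra.adjoin_le_centralizer_centralizer ℂ s ha
  have h2 := StarAlgebra.adjoin_le_centralizer_centralizer ℂ s hb
  rw [← SetLike.mem_coe, StarSubalgebra.coe_centralizer_centralizer] at h1 h2
  exact Set.centralizer_centralizer_comm_of_comm
    (fun x hx y hy => hcomm x (hsub hx) y (hsub hy)) a h1 b h2

variable (φ : ∀ S : StarSubalgebra ℂ (KSMat n),
      (∀ a ∈ S, ∀ b ∈ S, a * b = b * a) → (S →⋆ₐ[ℂ] A))
variable (χ : WeakDual.characterSpace ℂ A)

noncomputable def KSv (m : KSMat n) (hm : star m = m) : ℂ :=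
  χ (φ (StarAlgebra.adjoin ℂ {m})
    (ks_adjoin_comm {m} (by rintro a rfl b rfl; rfl)
      (by rintro a rfl; exact hm))
    ⟨m, StarAlgebra.self_mem_adjoin_singleton ℂ m⟩)

theorem KSv_eq
    (hcompat : ∀ (S T : StarSubalgebra ℂ (KSMat n))
      (hS : ∀ a ∈ S, ∀ b ∈ S, a * b = b * a) (hT : ∀ a ∈ T, ∀ b ∈ T, a * b = b * a)
      (hST : S ≤ T) (a : KSMat n) (ha : a ∈ S),
      φ T hT ⟨a, hST ha⟩ = φ S hS ⟨a, ha⟩) (S : StarSubalgebra ℂ (KSMat n)) (hS : ∀ a ∈ S, ∀ b ∈ S, a * b = b * a)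
    (m : KSMat n) (hm : star m = m) (hmem : m ∈ S) :
    χ (φ S hS ⟨m, hmem⟩) = KSv φ χ m hm := by
  unfold KSv
  congr 1
  exact hcompat _ S _ hS (StarAlgebra.adjoin_le (by simpa using hmem)) m _

variable {φ}

theorem KSv_mem_eq
    (hcompat : ∀ (S T : StarSubalgebra ℂ (KSMat n))
      (hS : ∀ a ∈ S, ∀ b ∈ S, a * b = b * a) (hT : ∀ a ∈ T, ∀ b ∈ T, a * b = b * a)
      (hST : S ≤ T) (a : KSMat n) (ha : a ∈ S),
      φ T hT ⟨a, hST ha⟩ = φ S hS ⟨a, ha⟩)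
    (s : Set (KSMat n)) (hcomm : ∀ a ∈ s, ∀ b ∈ s, a * b = b * a)
    (hstar : ∀ a ∈ s, star a = a) (m : KSMat n) (hm : star m = m) (hms : m ∈ s) :
    χ (φ (StarAlgebra.adjoin ℂ s) (ks_adjoin_comm s hcomm hstar)
        ⟨m, StarAlgebra.subset_adjoin ℂ s hms⟩) = KSv φ χ m hm :=
  KSv_eq φ χ (hcompat) _ _ m hm _

theorem KSv_idem
    (hcompat : ∀ (S T : StarSubalgebra ℂ (KSMat n))
      (hS : ∀ a ∈ S, ∀ b ∈ S, a * b = b * a) (hT : ∀ a ∈ T, ∀ b ∈ T, a * b = b * a)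
      (hST : S ≤ T) (a : KSMat n) (ha : a ∈ S),
      φ T hT ⟨a, hST ha⟩ = φ S hS ⟨a, ha⟩)
    (m : KSMat n) (hm : star m = m) (hmul : m * m = m) :
    KSv φ χ m hm = 0 ∨ KSv φ χ m hm = 1 := by
  set S := StarAlgebra.adjoin ℂ ({m} : Set (KSMat n))
  have hS : ∀ a ∈ S, ∀ b ∈ S, a * b = b * a :=
    ks_adjoin_comm {m} (by rintro a rfl b rfl; rfl) (by rintro a rfl; exact hm)
  have hmem : m ∈ S := StarAlgebra.self_mem_adjoin_singleton ℂ m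
  have key : KSv φ χ m hm * KSv φ χ m hm = KSv φ χ m hm := by
    rw [← KSv_eq φ χ hcompat S hS m hm hmem, ← _root_.map_mul, ← _root_.map_mul]
    congr 2
    exact Subtype.ext hmul
  have h2 : KSv φ χ m hm * (KSv φ χ m hm - 1) = 0 := by ring_nf; linear_combination key
  rcases mul_eq_zero.mp h2 with h | h
  · exact Or.inl h
  · exact Or.inr (by linear_combination h)

theorem KSv_mul_orth
    (hcompat : ∀ (S T : StarSubalgebra ℂ (KSMat n))
      (hS : ∀ a ∈ S, ∀ b ∈ S, a * b = b * a) (hT : ∀ a ∈ T, ∀ b ∈ T, a * b = b * a)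
      (hST : S ≤ T) (a : KSMat n) (ha : a ∈ S),
      φ T hT ⟨a, hST ha⟩ = φ S hS ⟨a, ha⟩)
    (m m' : KSMat n) (hm : star m = m) (hm' : star m' = m')
    (h1 : m * m' = 0) (h2 : m' * m = 0) :
    KSv φ χ m hm * KSv φ χ m' hm' = 0 := by
  set s : Set (KSMat n) := {m, m'}
  have hcomm : ∀ a ∈ s, ∀ b ∈ s, a * b = b * a := by
    rintro a (rfl | rfl) b (rfl | rfl) <;> simp [h1, h2]
  have hstar : ∀ a ∈ s, star a = a := by rintro a (rfl | rfl) <;> assumption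
  set S := StarAlgebra.adjoin ℂ s
  have hS := ks_adjoin_comm s hcomm hstar
  have hmem : m ∈ S := StarAlgebra.subset_adjoin ℂ s (by left; rfl)
  have hmem' : m' ∈ S := StarAlgebra.subset_adjoin ℂ s (by right; rfl)
  rw [← KSv_eq φ χ hcompat S hS m hm hmem, ← KSv_eq φ χ hcompat S hS m' hm' hmem',
    ← _root_.map_mul, ← _root_.map_mul]
  have : (⟨m, hmem⟩ * ⟨m', hmem'⟩ : S) = 0 := Subtype.ext (by simpa using h1)
  rw [this, map_zero, map_zero]

theorem KSv_sum
    (hcompat : ∀ (S T : StarSubalgebra ℂ (KSMat n))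
      (hS : ∀ a ∈ S, ∀ b ∈ S, a * b = b * a) (hT : ∀ a ∈ T, ∀ b ∈ T, a * b = b * a)
      (hST : S ≤ T) (a : KSMat n) (ha : a ∈ S),
      φ T hT ⟨a, hST ha⟩ = φ S hS ⟨a, ha⟩)
    (w : Fin n → KSMat n) (hstar : ∀ i, star (w i) = w i)
    (horth : ∀ i j, i ≠ j → w i * w j = 0)
    (hsum : ∑ i, w i = 1) :
    ∑ i, KSv φ χ (w i) (hstar i) = 1 := by
  set s : Set (KSMat n) := Set.range w
  have hcomm : ∀ a ∈ s, ∀ b ∈ s, a * b = b * a := by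
    rintro a ⟨i, rfl⟩ b ⟨j, rfl⟩
    by_cases h : i = j
    · subst h; rfl
    · rw [horth i j h, horth j i (Ne.symm h)]
  have hstar' : ∀ a ∈ s, star a = a := by rintro a ⟨i, rfl⟩; exact hstar i
  set S := StarAlgebra.adjoin ℂ s
  have hS := ks_adjoin_comm s hcomm hstar'
  have hmem : ∀ i, w i ∈ S := fun i => StarAlgebra.subset_adjoin ℂ s ⟨i, rfl⟩
  have key : ∀ i, KSv φ χ (w i) (hstar i) = χ (φ S hS ⟨w i, hmem i⟩) :=
    fun i => (KSv_eq φ χ hcompat S hS (w i) (hstar i) (hmem i)).symm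
  calc ∑ i, KSv φ χ (w i) (hstar i) = ∑ i, χ (φ S hS ⟨w i, hmem i⟩) := by
        exact Finset.sum_congr rfl fun i _ => key i
    _ = χ (φ S hS (∑ i, ⟨w i, hmem i⟩)) := by rw [map_sum, map_sum]
    _ = χ (φ S hS 1) := by
        congr 2
        exact Subtype.ext (by push_cast [hsum]; simp [hsum])
    _ = 1 := by rw [_root_.map_one, _root_.map_one]

end KS

section Rays
open scoped ComplexOrder

def crossMat {n : ℕ} (w w' : Fin n → ℝ) : KSMat n := fun i j => ((w i * w' j : ℝ) : ℂ)

def rdot {n : ℕ} (w w' : Fin n → ℝ) : ℝ := ∑ i, w i * w' i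

noncomputable def rayProj {n : ℕ} (w : Fin n → ℝ) : KSMat n :=
  (((rdot w w : ℝ) : ℂ))⁻¹ • crossMat w w

theorem crossMat_mul {n : ℕ} (w x y z : Fin n → ℝ) :
    crossMat w x * crossMat y z = ((rdot x y : ℝ) : ℂ) • crossMat w z := by
  ext i j
  simp only [Matrix.mul_apply, crossMat, Matrix.smul_apply, rdot, smul_eq_mul]
  push_cast
  rw [Finset.sum_mul]
  exact Finset.sum_congr rfl fun k _ => by ring

theorem rayProj_star {n : ℕ} (w : Fin n → ℝ) : star (rayProj w) = rayProj w := by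
  ext i j
  simp only [rayProj, Matrix.star_apply, Matrix.smul_apply, crossMat, smul_eq_mul, star_mul',
    Complex.star_def, ← Complex.ofReal_inv, Complex.conj_ofReal]
  ring

theorem rayProj_mul_self {n : ℕ} (w : Fin n → ℝ) (h : rdot w w ≠ 0) :
    rayProj w * rayProj w = rayProj w := by
  simp only [rayProj, Matrix.smul_mul, Matrix.mul_smul, crossMat_mul, smul_smul]
  congr 1
  have h' : ((rdot w w : ℝ) : ℂ) ≠ 0 := by exact_mod_cast h
  field_simp

theorem rayProj_mul_orth {n : ℕ} (w w' : Fin n → ℝ) (h : rdot w w' = 0) :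
    rayProj w * rayProj w' = 0 := by
  simp only [rayProj, Matrix.smul_mul, Matrix.mul_smul, crossMat_mul, smul_smul, h]
  simp

theorem rdot_comm {n : ℕ} (w w' : Fin n → ℝ) : rdot w w' = rdot w' w := by
  unfold rdot; exact Finset.sum_congr rfl fun k _ => by ring

theorem rayProj_basis_sum {n : ℕ} (W : Fin n → (Fin n → ℝ))
    (horth : ∀ i j, i ≠ j → rdot (W i) (W j) = 0)
    (hN : ∀ j, rdot (W j) (W j) ≠ 0) :
    ∑ j, rayProj (W j) = 1 := by
  classical
  set U : KSMat n := fun i j => ((W j i : ℝ) : ℂ) with hU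
  set D : KSMat n := Matrix.diagonal (fun j => (((rdot (W j) (W j) : ℝ) : ℂ))⁻¹) with hD
  have hcast : ∀ j j', ∑ i, ((W j i : ℝ) : ℂ) * ((W j' i : ℝ) : ℂ)
      = ((rdot (W j) (W j') : ℝ) : ℂ) := by
    intro j j'; rw [rdot]; push_cast; rfl
  have hUtU : U.transpose * U
      = Matrix.diagonal (fun j => ((rdot (W j) (W j) : ℝ) : ℂ)) := by
    ext j j'
    rw [Matrix.mul_apply]
    simp only [Matrix.transpose_apply]; simp only [hU]
    by_cases h : j = j'
    · subst h; rw [Matrix.diagonal_apply_eq]; exact hcast j j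
    · rw [Matrix.diagonal_apply_ne _ h, hcast j j', horth j j' h]
      simp
  have h1 : (D * U.transpose) * U = 1 := by
    rw [Matrix.mul_assoc, hUtU, hD, Matrix.diagonal_mul_diagonal]
    rw [show (fun j => ((((rdot (W j) (W j) : ℝ)) : ℂ))⁻¹ * ((rdot (W j) (W j) : ℝ) : ℂ))
        = fun _ => (1 : ℂ) from funext fun j => inv_mul_cancel₀ (by exact_mod_cast hN j)]
    exact Matrix.diagonal_one
  have hcomm : U * (D * U.transpose) = 1 := mul_eq_one_comm.mp h1
  rw [← hcomm]
  ext i i'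
  rw [Matrix.mul_apply, Matrix.sum_apply]
  refine Finset.sum_congr rfl fun j _ => ?_
  rw [Matrix.diagonal_mul]
  simp only [rayProj, Matrix.smul_apply, crossMat, smul_eq_mul, Matrix.transpose_apply]; simp only [hU]
  push_cast
  ring

theorem sum_split3 {n : ℕ} {p q r : Fin n} (hpq : p ≠ q) (hpr : p ≠ r) (hqr : q ≠ r)
    (f : Fin n → ℂ) :
    ∑ j, f j = f p + f q + f r + ∑ j ∈ Finset.univ \ {p, q, r}, f j := by
  classical
  have hsub : ({p, q, r} : Finset (Fin n)) ⊆ Finset.univ := Finset.subset_univ _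
  rw [← Finset.sum_sdiff hsub]
  have : ∑ j ∈ ({p, q, r} : Finset (Fin n)), f j = f p + f q + f r := by
    rw [Finset.sum_insert (by simp [hpq, hpr]), Finset.sum_insert (by simp [hqr]),
      Finset.sum_singleton]
    ring
  rw [this]; ring

end Rays

section KS2
variable {n : ℕ} {A : Type*} [NormedCommRing A] [StarRing A] [CStarRing A]
  [NormedAlgebra ℂ A] [StarModule ℂ A] [CompleteSpace A]
variable {φ : ∀ S : StarSubalgebra ℂ (KSMat n),
      (∀ a ∈ S, ∀ b ∈ S, a * b = b * a) → (S →⋆ₐ[ℂ] A)}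
variable (χ : WeakDual.characterSpace ℂ A)

noncomputable def KSu (φ : ∀ S : StarSubalgebra ℂ (KSMat n),
      (∀ a ∈ S, ∀ b ∈ S, a * b = b * a) → (S →⋆ₐ[ℂ] A))
    (χ : WeakDual.characterSpace ℂ A) (w : Fin n → ℝ) : ℂ :=
  KSv φ χ (rayProj w) (rayProj_star w)

variable (hcompat : ∀ (S T : StarSubalgebra ℂ (KSMat n))
      (hS : ∀ a ∈ S, ∀ b ∈ S, a * b = b * a) (hT : ∀ a ∈ T, ∀ b ∈ T, a * b = b * a)
      (hST : S ≤ T) (a : KSMat n) (ha : a ∈ S),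
      φ T hT ⟨a, hST ha⟩ = φ S hS ⟨a, ha⟩)

include hcompat

theorem KSu01 (w : Fin n → ℝ) (h : rdot w w ≠ 0) :
    KSu φ χ w = 0 ∨ KSu φ χ w = 1 :=
  KSv_idem χ hcompat _ _ (rayProj_mul_self w h)

theorem KSu_orth (w w' : Fin n → ℝ) (h : rdot w w' = 0) :
    KSu φ χ w * KSu φ χ w' = 0 :=
  KSv_mul_orth χ hcompat _ _ _ _ (rayProj_mul_orth w w' h)
    (rayProj_mul_orth w' w ((rdot_comm w w') ▸ h))

theorem KSu_basis (W : Fin n → (Fin n → ℝ))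
    (horth : ∀ i j, i ≠ j → rdot (W i) (W j) = 0)
    (hsum : ∑ i, rayProj (W i) = 1) :
    ∑ i, KSu φ χ (W i) = 1 :=
  KSv_sum χ hcompat _ (fun i => rayProj_star (W i))
    (fun i j hij => rayProj_mul_orth _ _ (horth i j hij)) hsum

end KS2

section ZS

noncomputable def σ2 : ℤ√2 →+* ℝ := Zsqrtd.toReal (by norm_num)

theorem σ2_ne_zero (z : ℤ√2) (h1 : 0 < z.re) (h2 : 0 ≤ z.im) : σ2 z ≠ 0 := by
  have key : (0:ℝ) < (z.re : ℝ) + (z.im : ℝ) * Real.sqrt ((2:ℤ) : ℝ) := by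
    have h3 : (0:ℝ) ≤ (z.im : ℝ) * Real.sqrt ((2:ℤ) : ℝ) :=
      mul_nonneg (by exact_mod_cast h2) (Real.sqrt_nonneg _)
    have h4 : (0:ℝ) < (z.re : ℝ) := by exact_mod_cast h1
    linarith
  have : σ2 z = (z.re : ℝ) + (z.im : ℝ) * Real.sqrt ((2:ℤ) : ℝ) := by
    simp [σ2, Zsqrtd.toReal_apply]
  rw [this]
  exact ne_of_gt key

def zdot (x y : Fin 3 → ℤ√2) : ℤ√2 := x 0 * y 0 + x 1 * y 1 + x 2 * y 2

noncomputable def extv {n : ℕ} (p q r : Fin n) (x : Fin 3 → ℤ√2) : Fin n → ℝ :=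
  fun i => if i = p then σ2 (x 0) else if i = q then σ2 (x 1) else if i = r then σ2 (x 2) else 0

def rdelta {n : ℕ} (j : Fin n) : Fin n → ℝ := fun i => if i = j then 1 else 0

theorem rdot_rdelta {n : ℕ} (w : Fin n → ℝ) (j : Fin n) : rdot w (rdelta j) = w j := by
  simp [rdot, rdelta, mul_ite, mul_one, mul_zero]

theorem rdelta_rdot {n : ℕ} (w : Fin n → ℝ) (j : Fin n) : rdot (rdelta j) w = w j := by
  rw [rdot_comm]; exact rdot_rdelta w j

theorem extv_apply_notmem {n : ℕ} {p q r j : Fin n} (hp : j ≠ p) (hq : j ≠ q) (hr : j ≠ r)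
    (x : Fin 3 → ℤ√2) : extv p q r x j = 0 := by
  simp [extv, hp, hq, hr]

theorem rdot_extv {n : ℕ} {p q r : Fin n} (hpq : p ≠ q) (hpr : p ≠ r) (hqr : q ≠ r)
    (x y : Fin 3 → ℤ√2) :
    rdot (extv p q r x) (extv p q r y) = σ2 (zdot x y) := by
  classical
  have hvan : ∀ i ∈ Finset.univ, i ∉ ({p, q, r} : Finset (Fin n)) →
      extv p q r x i * extv p q r y i = 0 := by
    intro i _ hi
    simp only [Finset.mem_insert, Finset.mem_singleton, not_or] at hi
    rw [extv_apply_notmem hi.1 hi.2.1 hi.2.2, zero_mul]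
  rw [rdot, ← Finset.sum_subset (Finset.subset_univ ({p, q, r} : Finset (Fin n))) hvan]
  rw [Finset.sum_insert (by simp [hpq, hpr]), Finset.sum_insert (by simp [hqr]),
    Finset.sum_singleton]
  simp only [extv, if_pos rfl, if_neg hpq.symm, if_neg hpr.symm, if_neg hqr.symm]
  rw [zdot, _root_.map_add, _root_.map_add, _root_.map_mul, _root_.map_mul, _root_.map_mul]
  simp only [if_true]
  ring

theorem rdot_extv_self {n : ℕ} {p q r : Fin n} (hpq : p ≠ q) (hpr : p ≠ r) (hqr : q ≠ r)
    (x : Fin 3 → ℤ√2) :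
    rdot (extv p q r x) (extv p q r x) = σ2 (zdot x x) := rdot_extv hpq hpr hqr x x

theorem rdot_rdelta_rdelta {n : ℕ} {i j : Fin n} (h : i ≠ j) :
    rdot (rdelta i) (rdelta j) = 0 := by
  rw [rdot_rdelta, rdelta, if_neg h.symm]

theorem rdot_rdelta_self {n : ℕ} (j : Fin n) : rdot (rdelta j) (rdelta j) = 1 := by
  rw [rdot_rdelta, rdelta, if_pos rfl]

end ZS

section KS3
variable {n : ℕ} {A : Type*} [NormedCommRing A] [StarRing A] [CStarRing A]
  [NormedAlgebra ℂ A] [StarModule ℂ A] [CompleteSpace A]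
variable {φ : ∀ S : StarSubalgebra ℂ (KSMat n),
      (∀ a ∈ S, ∀ b ∈ S, a * b = b * a) → (S →⋆ₐ[ℂ] A)}
variable (χ : WeakDual.characterSpace ℂ A)
variable (hcompat : ∀ (S T : StarSubalgebra ℂ (KSMat n))
      (hS : ∀ a ∈ S, ∀ b ∈ S, a * b = b * a) (hT : ∀ a ∈ T, ∀ b ∈ T, a * b = b * a)
      (hST : S ≤ T) (a : KSMat n) (ha : a ∈ S),
      φ T hT ⟨a, hST ha⟩ = φ S hS ⟨a, ha⟩)

include hcompat

theorem KSu_std : ∃ k : Fin n, ∀ j, j ≠ k → KSu φ χ (rdelta j) = 0 := by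
  have horth : ∀ i j : Fin n, i ≠ j → rdot (rdelta i) (rdelta j) = 0 :=
    fun i j h => rdot_rdelta_rdelta h
  have hsum : ∑ j, rayProj (rdelta (n := n) j) = 1 :=
    rayProj_basis_sum _ horth (fun j => by rw [rdot_rdelta_self]; norm_num)
  have htot : ∑ j, KSu φ χ (rdelta j) = 1 := KSu_basis χ hcompat _ horth hsum
  have hex : ∃ k : Fin n, KSu φ χ (rdelta k) ≠ 0 := by
    by_contra hall
    push_neg at hall
    rw [Finset.sum_eq_zero (fun j _ => hall j)] at htot
    exact zero_ne_one htot
  obtain ⟨k, hk⟩ := hex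
  have hk1 : KSu φ χ (rdelta k) = 1 := by
    rcases KSu01 χ hcompat (rdelta k) (by rw [rdot_rdelta_self]; norm_num) with h | h
    · exact absurd h hk
    · exact h
  refine ⟨k, fun j hj => ?_⟩
  have := KSu_orth χ hcompat (rdelta j) (rdelta k) (rdot_rdelta_rdelta hj)
  rwa [hk1, mul_one] at this

theorem KSu_triad (p q r : Fin n) (hpq : p ≠ q) (hpr : p ≠ r) (hqr : q ≠ r)
    (x1 x2 x3 : Fin 3 → ℤ√2)
    (h12 : zdot x1 x2 = 0) (h13 : zdot x1 x3 = 0) (h23 : zdot x2 x3 = 0)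
    (h21 : zdot x2 x1 = 0) (h31 : zdot x3 x1 = 0) (h32 : zdot x3 x2 = 0)
    (hN1 : σ2 (zdot x1 x1) ≠ 0) (hN2 : σ2 (zdot x2 x2) ≠ 0) (hN3 : σ2 (zdot x3 x3) ≠ 0)
    (hdel : ∀ j, j ≠ p → KSu φ χ (rdelta j) = 0) :
    KSu φ χ (extv p q r x1) + KSu φ χ (extv p q r x2) + KSu φ χ (extv p q r x3) = 1 := by
  classical
  set W : Fin n → (Fin n → ℝ) := fun j =>
    if j = p then extv p q r x1 else if j = q then extv p q r x2
    else if j = r then extv p q r x3 else rdelta j with hW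
  have hWp : W p = extv p q r x1 := by simp [hW]
  have hWq : W q = extv p q r x2 := by simp [hW, hpq.symm]
  have hWr : W r = extv p q r x3 := by simp [hW, hpr.symm, hqr.symm]
  have hWo : ∀ j, j ≠ p → j ≠ q → j ≠ r → W j = rdelta j := by
    intro j h1 h2 h3; simp [hW, h1, h2, h3]
  have hrdotd : ∀ (x : Fin 3 → ℤ√2) (j : Fin n), j ≠ p → j ≠ q → j ≠ r →
      rdot (extv p q r x) (rdelta j) = 0 := by
    intro x j h1 h2 h3
    rw [rdot_rdelta, extv_apply_notmem h1 h2 h3]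
  have horth : ∀ i j : Fin n, i ≠ j → rdot (W i) (W j) = 0 := by
    intro i j hij
    rcases eq_or_ne i p with rfl | hip
    · rw [hWp]
      rcases eq_or_ne j q with rfl | hjq
      · rw [hWq, rdot_extv hpq hpr hqr, h12, map_zero]
      rcases eq_or_ne j r with rfl | hjr
      · rw [hWr, rdot_extv hpq hpr hqr, h13, map_zero]
      · rw [hWo j (Ne.symm hij) hjq hjr, hrdotd _ j (Ne.symm hij) hjq hjr]
    rcases eq_or_ne i q with rfl | hiq
    · rw [hWq]
      rcases eq_or_ne j p with rfl | hjp
      · rw [hWp, rdot_extv hpq hpr hqr, h21, map_zero]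
      rcases eq_or_ne j r with rfl | hjr
      · rw [hWr, rdot_extv hpq hpr hqr, h23, map_zero]
      · rw [hWo j hjp (Ne.symm hij) hjr, hrdotd _ j hjp (Ne.symm hij) hjr]
    rcases eq_or_ne i r with rfl | hir
    · rw [hWr]
      rcases eq_or_ne j p with rfl | hjp
      · rw [hWp, rdot_extv hpq hpr hqr, h31, map_zero]
      rcases eq_or_ne j q with rfl | hjq
      · rw [hWq, rdot_extv hpq hpr hqr, h32, map_zero]
      · rw [hWo j hjp hjq (Ne.symm hij), hrdotd _ j hjp hjq (Ne.symm hij)]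
    · rw [hWo i hip hiq hir]
      rcases eq_or_ne j p with rfl | hjp
      · rw [hWp, rdot_comm, hrdotd _ i hip hiq hir]
      rcases eq_or_ne j q with rfl | hjq
      · rw [hWq, rdot_comm, hrdotd _ i hip hiq hir]
      rcases eq_or_ne j r with rfl | hjr
      · rw [hWr, rdot_comm, hrdotd _ i hip hiq hir]
      · rw [hWo j hjp hjq hjr, rdot_rdelta_rdelta hij]
  have hN : ∀ j : Fin n, rdot (W j) (W j) ≠ 0 := by
    intro j
    rcases eq_or_ne j p with rfl | hjp
    · rw [hWp, rdot_extv hpq hpr hqr]; exact hN1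
    rcases eq_or_ne j q with rfl | hjq
    · rw [hWq, rdot_extv hpq hpr hqr]; exact hN2
    rcases eq_or_ne j r with rfl | hjr
    · rw [hWr, rdot_extv hpq hpr hqr]; exact hN3
    · rw [hWo j hjp hjq hjr, rdot_rdelta_self]; norm_num
  have hsum := rayProj_basis_sum W horth hN
  have htot : ∑ j, KSu φ χ (W j) = 1 := KSu_basis χ hcompat W horth hsum
  rw [sum_split3 hpq hpr hqr] at htot
  have hz : ∑ j ∈ Finset.univ \ ({p, q, r} : Finset (Fin n)), KSu φ χ (W j) = 0 := by
    refine Finset.sum_eq_zero fun j hj => ?_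
    simp only [Finset.mem_sdiff, Finset.mem_insert, Finset.mem_singleton, not_or] at hj
    rw [hWo j hj.2.1 hj.2.2.1 hj.2.2.2]
    exact hdel j hj.2.1
  rw [hWp, hWq, hWr, hz, add_zero] at htot
  exact htot

theorem KSu_pair (p q r : Fin n) (hpq : p ≠ q) (hpr : p ≠ r) (hqr : q ≠ r)
    (x y : Fin 3 → ℤ√2) (hxy : zdot x y = 0) :
    KSu φ χ (extv p q r x) * KSu φ χ (extv p q r y) = 0 :=
  KSu_orth χ hcompat _ _ (by rw [rdot_extv hpq hpr hqr, hxy, map_zero])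

theorem KSu_extv01 (p q r : Fin n) (hpq : p ≠ q) (hpr : p ≠ r) (hqr : q ≠ r)
    (x : Fin 3 → ℤ√2) (hx : σ2 (zdot x x) ≠ 0) :
    KSu φ χ (extv p q r x) = 0 ∨ KSu φ χ (extv p q r x) = 1 :=
  KSu01 χ hcompat _ (by rw [rdot_extv hpq hpr hqr]; exact hx)

end KS3

def P0 : Fin 3 → ℤ√2 := ![⟨0,0⟩, ⟨0,0⟩, ⟨1,0⟩]
def P1 : Fin 3 → ℤ√2 := ![⟨0,0⟩, ⟨0,1⟩, ⟨-1,0⟩]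
def P2 : Fin 3 → ℤ√2 := ![⟨0,0⟩, ⟨0,1⟩, ⟨1,0⟩]
def P3 : Fin 3 → ℤ√2 := ![⟨0,0⟩, ⟨1,0⟩, ⟨-1,0⟩]
def P4 : Fin 3 → ℤ√2 := ![⟨0,0⟩, ⟨1,0⟩, ⟨0,-1⟩]
def P5 : Fin 3 → ℤ√2 := ![⟨0,0⟩, ⟨1,0⟩, ⟨0,0⟩]
def P6 : Fin 3 → ℤ√2 := ![⟨0,0⟩, ⟨1,0⟩, ⟨0,1⟩]
def P7 : Fin 3 → ℤ√2 := ![⟨0,0⟩, ⟨1,0⟩, ⟨1,0⟩]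
def P8 : Fin 3 → ℤ√2 := ![⟨0,1⟩, ⟨-1,0⟩, ⟨-1,0⟩]
def P9 : Fin 3 → ℤ√2 := ![⟨0,1⟩, ⟨-1,0⟩, ⟨0,0⟩]
def P10 : Fin 3 → ℤ√2 := ![⟨0,1⟩, ⟨-1,0⟩, ⟨1,0⟩]
def P11 : Fin 3 → ℤ√2 := ![⟨0,1⟩, ⟨0,0⟩, ⟨-1,0⟩]
def P12 : Fin 3 → ℤ√2 := ![⟨0,1⟩, ⟨0,0⟩, ⟨1,0⟩]
def P13 : Fin 3 → ℤ√2 := ![⟨0,1⟩, ⟨1,0⟩, ⟨-1,0⟩]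
def P14 : Fin 3 → ℤ√2 := ![⟨0,1⟩, ⟨1,0⟩, ⟨0,0⟩]
def P15 : Fin 3 → ℤ√2 := ![⟨0,1⟩, ⟨1,0⟩, ⟨1,0⟩]
def P16 : Fin 3 → ℤ√2 := ![⟨1,0⟩, ⟨-1,0⟩, ⟨0,-1⟩]
def P17 : Fin 3 → ℤ√2 := ![⟨1,0⟩, ⟨-1,0⟩, ⟨0,0⟩]
def P18 : Fin 3 → ℤ√2 := ![⟨1,0⟩, ⟨-1,0⟩, ⟨0,1⟩]
def P19 : Fin 3 → ℤ√2 := ![⟨1,0⟩, ⟨0,-1⟩, ⟨-1,0⟩]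
def P20 : Fin 3 → ℤ√2 := ![⟨1,0⟩, ⟨0,-1⟩, ⟨0,0⟩]
def P21 : Fin 3 → ℤ√2 := ![⟨1,0⟩, ⟨0,-1⟩, ⟨1,0⟩]
def P22 : Fin 3 → ℤ√2 := ![⟨1,0⟩, ⟨0,0⟩, ⟨-1,0⟩]
def P23 : Fin 3 → ℤ√2 := ![⟨1,0⟩, ⟨0,0⟩, ⟨0,-1⟩]
def P24 : Fin 3 → ℤ√2 := ![⟨1,0⟩, ⟨0,0⟩, ⟨0,0⟩]
def P25 : Fin 3 → ℤ√2 := ![⟨1,0⟩, ⟨0,0⟩, ⟨0,1⟩]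
def P26 : Fin 3 → ℤ√2 := ![⟨1,0⟩, ⟨0,0⟩, ⟨1,0⟩]
def P27 : Fin 3 → ℤ√2 := ![⟨1,0⟩, ⟨0,1⟩, ⟨-1,0⟩]
def P28 : Fin 3 → ℤ√2 := ![⟨1,0⟩, ⟨0,1⟩, ⟨0,0⟩]
def P29 : Fin 3 → ℤ√2 := ![⟨1,0⟩, ⟨0,1⟩, ⟨1,0⟩]
def P30 : Fin 3 → ℤ√2 := ![⟨1,0⟩, ⟨1,0⟩, ⟨0,-1⟩]
def P31 : Fin 3 → ℤ√2 := ![⟨1,0⟩, ⟨1,0⟩, ⟨0,0⟩]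
def P32 : Fin 3 → ℤ√2 := ![⟨1,0⟩, ⟨1,0⟩, ⟨0,1⟩]

theorem peres_false (u0 u1 u2 u3 u4 u5 u6 u7 u8 u9 u10 u11 u12 u13 u14 u15 u16 u17 u18 u19 u20 u21 u22 u23 u24 u25 u26 u27 u28 u29 u30 u31 u32 : ℂ)
    (hb0 : u0 = 0 ∨ u0 = 1)
    (hb1 : u1 = 0 ∨ u1 = 1)
    (hb2 : u2 = 0 ∨ u2 = 1)
    (hb3 : u3 = 0 ∨ u3 = 1)
    (hb4 : u4 = 0 ∨ u4 = 1)
    (hb5 : u5 = 0 ∨ u5 = 1)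
    (hb6 : u6 = 0 ∨ u6 = 1)
    (hb7 : u7 = 0 ∨ u7 = 1)
    (hb8 : u8 = 0 ∨ u8 = 1)
    (hb9 : u9 = 0 ∨ u9 = 1)
    (hb10 : u10 = 0 ∨ u10 = 1)
    (hb11 : u11 = 0 ∨ u11 = 1)
    (hb12 : u12 = 0 ∨ u12 = 1)
    (hb13 : u13 = 0 ∨ u13 = 1)
    (hb14 : u14 = 0 ∨ u14 = 1)
    (hb15 : u15 = 0 ∨ u15 = 1)
    (hb16 : u16 = 0 ∨ u16 = 1)
    (hb17 : u17 = 0 ∨ u17 = 1)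
    (hb18 : u18 = 0 ∨ u18 = 1)
    (hb19 : u19 = 0 ∨ u19 = 1)
    (hb20 : u20 = 0 ∨ u20 = 1)
    (hb21 : u21 = 0 ∨ u21 = 1)
    (hb22 : u22 = 0 ∨ u22 = 1)
    (hb23 : u23 = 0 ∨ u23 = 1)
    (hb24 : u24 = 0 ∨ u24 = 1)
    (hb25 : u25 = 0 ∨ u25 = 1)
    (hb26 : u26 = 0 ∨ u26 = 1)
    (hb27 : u27 = 0 ∨ u27 = 1)
    (hb28 : u28 = 0 ∨ u28 = 1)
    (hb29 : u29 = 0 ∨ u29 = 1)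
    (hb30 : u30 = 0 ∨ u30 = 1)
    (hb31 : u31 = 0 ∨ u31 = 1)
    (hb32 : u32 = 0 ∨ u32 = 1)
    (p_0_5 : u0 * u5 = 0)
    (p_0_9 : u0 * u9 = 0)
    (p_0_14 : u0 * u14 = 0)
    (p_0_17 : u0 * u17 = 0)
    (p_0_20 : u0 * u20 = 0)
    (p_0_24 : u0 * u24 = 0)
    (p_0_28 : u0 * u28 = 0)
    (p_0_31 : u0 * u31 = 0)
    (p_1_6 : u1 * u6 = 0)
    (p_1_16 : u1 * u16 = 0)
    (p_1_24 : u1 * u24 = 0)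
    (p_1_32 : u1 * u32 = 0)
    (p_2_4 : u2 * u4 = 0)
    (p_2_18 : u2 * u18 = 0)
    (p_2_24 : u2 * u24 = 0)
    (p_2_30 : u2 * u30 = 0)
    (p_3_7 : u3 * u7 = 0)
    (p_3_8 : u3 * u8 = 0)
    (p_3_15 : u3 * u15 = 0)
    (p_3_24 : u3 * u24 = 0)
    (p_4_19 : u4 * u19 = 0)
    (p_4_24 : u4 * u24 = 0)
    (p_4_29 : u4 * u29 = 0)
    (p_5_11 : u5 * u11 = 0)
    (p_5_12 : u5 * u12 = 0)
    (p_5_22 : u5 * u22 = 0)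
    (p_5_23 : u5 * u23 = 0)
    (p_5_24 : u5 * u24 = 0)
    (p_5_25 : u5 * u25 = 0)
    (p_5_26 : u5 * u26 = 0)
    (p_6_21 : u6 * u21 = 0)
    (p_6_24 : u6 * u24 = 0)
    (p_6_27 : u6 * u27 = 0)
    (p_7_10 : u7 * u10 = 0)
    (p_7_13 : u7 * u13 = 0)
    (p_7_24 : u7 * u24 = 0)
    (p_8_15 : u8 * u15 = 0)
    (p_8_25 : u8 * u25 = 0)
    (p_8_28 : u8 * u28 = 0)
    (p_9_27 : u9 * u27 = 0)
    (p_9_28 : u9 * u28 = 0)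
    (p_9_29 : u9 * u29 = 0)
    (p_10_13 : u10 * u13 = 0)
    (p_10_23 : u10 * u23 = 0)
    (p_10_28 : u10 * u28 = 0)
    (p_11_18 : u11 * u18 = 0)
    (p_11_25 : u11 * u25 = 0)
    (p_11_32 : u11 * u32 = 0)
    (p_12_16 : u12 * u16 = 0)
    (p_12_23 : u12 * u23 = 0)
    (p_12_30 : u12 * u30 = 0)
    (p_13_20 : u13 * u20 = 0)
    (p_13_25 : u13 * u25 = 0)
    (p_14_19 : u14 * u19 = 0)
    (p_14_20 : u14 * u20 = 0)
    (p_14_21 : u14 * u21 = 0)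
    (p_15_20 : u15 * u20 = 0)
    (p_15_23 : u15 * u23 = 0)
    (p_16_18 : u16 * u18 = 0)
    (p_16_31 : u16 * u31 = 0)
    (p_17_30 : u17 * u30 = 0)
    (p_17_31 : u17 * u31 = 0)
    (p_17_32 : u17 * u32 = 0)
    (p_18_31 : u18 * u31 = 0)
    (p_19_26 : u19 * u26 = 0)
    (p_19_27 : u19 * u27 = 0)
    (p_21_22 : u21 * u22 = 0)
    (p_21_29 : u21 * u29 = 0)
    (p_22_26 : u22 * u26 = 0)
    (p_22_29 : u22 * u29 = 0)
    (p_26_27 : u26 * u27 = 0)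
    (p_30_32 : u30 * u32 = 0)
    (t_0_5_24 : u0 + u5 + u24 = 1)
    (t_0_9_28 : u0 + u9 + u28 = 1)
    (t_0_14_20 : u0 + u14 + u20 = 1)
    (t_0_17_31 : u0 + u17 + u31 = 1)
    (t_1_6_24 : u1 + u6 + u24 = 1)
    (t_2_4_24 : u2 + u4 + u24 = 1)
    (t_3_7_24 : u3 + u7 + u24 = 1)
    (t_3_8_15 : u3 + u8 + u15 = 1)
    (t_5_11_25 : u5 + u11 + u25 = 1)
    (t_5_12_23 : u5 + u12 + u23 = 1)
    (t_5_22_26 : u5 + u22 + u26 = 1)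
    (t_7_10_13 : u7 + u10 + u13 = 1)
    (t_16_18_31 : u16 + u18 + u31 = 1)
    (t_17_30_32 : u17 + u30 + u32 = 1)
    (t_19_26_27 : u19 + u26 + u27 = 1)
    (t_21_22_29 : u21 + u22 + u29 = 1) : False := by
  rcases hb0 with h0 | h0
  · -- u0 = 0
    rcases hb1 with h1 | h1
    · -- u1 = 0
      rcases hb2 with h2 | h2
      · -- u2 = 0
        rcases hb3 with h3 | h3
        · -- u3 = 0
          rcases hb4 with h4 | h4
          · -- u4 = 0
            have h24 : u24 = 1 := by linear_combination t_2_4_24 - h2 - h4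
            have h5 : u5 = 0 := by linear_combination p_5_24 - u5 * h24
            have h6 : u6 = 0 := by linear_combination p_6_24 - u6 * h24
            have h7 : u7 = 0 := by linear_combination p_7_24 - u7 * h24
            rcases hb8 with h8 | h8
            · -- u8 = 0
              have h15 : u15 = 1 := by linear_combination t_3_8_15 - h3 - h8
              have h20 : u20 = 0 := by linear_combination p_15_20 - u20 * h15
              have h23 : u23 = 0 := by linear_combination p_15_23 - u23 * h15
              have h14 : u14 = 1 := by linear_combination t_0_14_20 - h0 - h20
              have h12 : u12 = 1 := by linear_combination t_5_12_23 - h5 - h23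
              have h16 : u16 = 0 := by linear_combination p_12_16 - u16 * h12
              have h30 : u30 = 0 := by linear_combination p_12_30 - u30 * h12
              have h19 : u19 = 0 := by linear_combination p_14_19 - u19 * h14
              have h21 : u21 = 0 := by linear_combination p_14_21 - u21 * h14
              rcases hb9 with h9 | h9
              · -- u9 = 0
                have h28 : u28 = 1 := by linear_combination t_0_9_28 - h0 - h9
                have h10 : u10 = 0 := by linear_combination p_10_28 - u10 * h28
                have h13 : u13 = 1 := by linear_combination t_7_10_13 - h7 - h10
                have h25 : u25 = 0 := by linear_combination p_13_25 - u25 * h13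
                have h11 : u11 = 1 := by linear_combination t_5_11_25 - h5 - h25
                have h18 : u18 = 0 := by linear_combination p_11_18 - u18 * h11
                have h32 : u32 = 0 := by linear_combination p_11_32 - u32 * h11
                have h31 : u31 = 1 := by linear_combination t_16_18_31 - h16 - h18
                have h17 : u17 = 1 := by linear_combination t_17_30_32 - h30 - h32
                exact one_ne_zero (by linear_combination p_17_31 - u31 * h17 - h31)
              · -- u9 = 1
                have h27 : u27 = 0 := by linear_combination p_9_27 - u27 * h9
                have h28 : u28 = 0 := by linear_combination p_9_28 - u28 * h9
                have h29 : u29 = 0 := by linear_combination p_9_29 - u29 * h9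
                have h26 : u26 = 1 := by linear_combination t_19_26_27 - h19 - h27
                have h22 : u22 = 1 := by linear_combination t_21_22_29 - h21 - h29
                exact one_ne_zero (by linear_combination p_22_26 - u26 * h22 - h26)
            · -- u8 = 1
              have h15 : u15 = 0 := by linear_combination p_8_15 - u15 * h8
              have h25 : u25 = 0 := by linear_combination p_8_25 - u25 * h8
              have h28 : u28 = 0 := by linear_combination p_8_28 - u28 * h8
              have h9 : u9 = 1 := by linear_combination t_0_9_28 - h0 - h28
              have h11 : u11 = 1 := by linear_combination t_5_11_25 - h5 - h25
              have h27 : u27 = 0 := by linear_combination p_9_27 - u27 * h9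
              have h29 : u29 = 0 := by linear_combination p_9_29 - u29 * h9
              have h18 : u18 = 0 := by linear_combination p_11_18 - u18 * h11
              have h32 : u32 = 0 := by linear_combination p_11_32 - u32 * h11
              rcases hb10 with h10 | h10
              · -- u10 = 0
                have h13 : u13 = 1 := by linear_combination t_7_10_13 - h7 - h10
                have h20 : u20 = 0 := by linear_combination p_13_20 - u20 * h13
                have h14 : u14 = 1 := by linear_combination t_0_14_20 - h0 - h20
                have h19 : u19 = 0 := by linear_combination p_14_19 - u19 * h14
                have h21 : u21 = 0 := by linear_combination p_14_21 - u21 * h14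
                have h26 : u26 = 1 := by linear_combination t_19_26_27 - h19 - h27
                have h22 : u22 = 1 := by linear_combination t_21_22_29 - h21 - h29
                exact one_ne_zero (by linear_combination p_22_26 - u26 * h22 - h26)
              · -- u10 = 1
                have h13 : u13 = 0 := by linear_combination p_10_13 - u13 * h10
                have h23 : u23 = 0 := by linear_combination p_10_23 - u23 * h10
                have h12 : u12 = 1 := by linear_combination t_5_12_23 - h5 - h23
                have h16 : u16 = 0 := by linear_combination p_12_16 - u16 * h12
                have h30 : u30 = 0 := by linear_combination p_12_30 - u30 * h12
                have h31 : u31 = 1 := by linear_combination t_16_18_31 - h16 - h18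
                have h17 : u17 = 1 := by linear_combination t_17_30_32 - h30 - h32
                exact one_ne_zero (by linear_combination p_17_31 - u31 * h17 - h31)
          · -- u4 = 1
            have h19 : u19 = 0 := by linear_combination p_4_19 - u19 * h4
            have h24 : u24 = 0 := by linear_combination p_4_24 - u24 * h4
            have h29 : u29 = 0 := by linear_combination p_4_29 - u29 * h4
            have h5 : u5 = 1 := by linear_combination t_0_5_24 - h0 - h24
            have h6 : u6 = 1 := by linear_combination t_1_6_24 - h1 - h24
            have h7 : u7 = 1 := by linear_combination t_3_7_24 - h3 - h24
            have h11 : u11 = 0 := by linear_combination p_5_11 - u11 * h5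
            have h12 : u12 = 0 := by linear_combination p_5_12 - u12 * h5
            have h22 : u22 = 0 := by linear_combination p_5_22 - u22 * h5
            have h23 : u23 = 0 := by linear_combination p_5_23 - u23 * h5
            have h25 : u25 = 0 := by linear_combination p_5_25 - u25 * h5
            have h26 : u26 = 0 := by linear_combination p_5_26 - u26 * h5
            have h21 : u21 = 0 := by linear_combination p_6_21 - u21 * h6
            have h27 : u27 = 0 := by linear_combination p_6_27 - u27 * h6
            have h10 : u10 = 0 := by linear_combination p_7_10 - u10 * h7
            have h13 : u13 = 0 := by linear_combination p_7_13 - u13 * h7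
            exact one_ne_zero (by linear_combination h19 + h26 + h27 - t_19_26_27)
        · -- u3 = 1
          have h7 : u7 = 0 := by linear_combination p_3_7 - u7 * h3
          have h8 : u8 = 0 := by linear_combination p_3_8 - u8 * h3
          have h15 : u15 = 0 := by linear_combination p_3_15 - u15 * h3
          have h24 : u24 = 0 := by linear_combination p_3_24 - u24 * h3
          have h5 : u5 = 1 := by linear_combination t_0_5_24 - h0 - h24
          have h6 : u6 = 1 := by linear_combination t_1_6_24 - h1 - h24
          have h4 : u4 = 1 := by linear_combination t_2_4_24 - h2 - h24
          have h19 : u19 = 0 := by linear_combination p_4_19 - u19 * h4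
          have h29 : u29 = 0 := by linear_combination p_4_29 - u29 * h4
          have h11 : u11 = 0 := by linear_combination p_5_11 - u11 * h5
          have h12 : u12 = 0 := by linear_combination p_5_12 - u12 * h5
          have h22 : u22 = 0 := by linear_combination p_5_22 - u22 * h5
          have h23 : u23 = 0 := by linear_combination p_5_23 - u23 * h5
          have h25 : u25 = 0 := by linear_combination p_5_25 - u25 * h5
          have h26 : u26 = 0 := by linear_combination p_5_26 - u26 * h5
          have h21 : u21 = 0 := by linear_combination p_6_21 - u21 * h6
          have h27 : u27 = 0 := by linear_combination p_6_27 - u27 * h6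
          exact one_ne_zero (by linear_combination h19 + h26 + h27 - t_19_26_27)
      · -- u2 = 1
        have h4 : u4 = 0 := by linear_combination p_2_4 - u4 * h2
        have h18 : u18 = 0 := by linear_combination p_2_18 - u18 * h2
        have h24 : u24 = 0 := by linear_combination p_2_24 - u24 * h2
        have h30 : u30 = 0 := by linear_combination p_2_30 - u30 * h2
        have h5 : u5 = 1 := by linear_combination t_0_5_24 - h0 - h24
        have h6 : u6 = 1 := by linear_combination t_1_6_24 - h1 - h24
        have h11 : u11 = 0 := by linear_combination p_5_11 - u11 * h5
        have h12 : u12 = 0 := by linear_combination p_5_12 - u12 * h5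
        have h22 : u22 = 0 := by linear_combination p_5_22 - u22 * h5
        have h23 : u23 = 0 := by linear_combination p_5_23 - u23 * h5
        have h25 : u25 = 0 := by linear_combination p_5_25 - u25 * h5
        have h26 : u26 = 0 := by linear_combination p_5_26 - u26 * h5
        have h21 : u21 = 0 := by linear_combination p_6_21 - u21 * h6
        have h27 : u27 = 0 := by linear_combination p_6_27 - u27 * h6
        have h19 : u19 = 1 := by linear_combination t_19_26_27 - h26 - h27
        have h29 : u29 = 1 := by linear_combination t_21_22_29 - h21 - h22
        have h9 : u9 = 0 := by linear_combination p_9_29 - u9 * h29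
        have h14 : u14 = 0 := by linear_combination p_14_19 - u14 * h19
        have h28 : u28 = 1 := by linear_combination t_0_9_28 - h0 - h9
        have h20 : u20 = 1 := by linear_combination t_0_14_20 - h0 - h14
        have h8 : u8 = 0 := by linear_combination p_8_28 - u8 * h28
        have h10 : u10 = 0 := by linear_combination p_10_28 - u10 * h28
        have h13 : u13 = 0 := by linear_combination p_13_20 - u13 * h20
        have h15 : u15 = 0 := by linear_combination p_15_20 - u15 * h20
        have h3 : u3 = 1 := by linear_combination t_3_8_15 - h8 - h15
        have h7 : u7 = 1 := by linear_combination t_7_10_13 - h10 - h13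
        exact one_ne_zero (by linear_combination p_3_7 - u7 * h3 - h7)
    · -- u1 = 1
      have h6 : u6 = 0 := by linear_combination p_1_6 - u6 * h1
      have h16 : u16 = 0 := by linear_combination p_1_16 - u16 * h1
      have h24 : u24 = 0 := by linear_combination p_1_24 - u24 * h1
      have h32 : u32 = 0 := by linear_combination p_1_32 - u32 * h1
      have h5 : u5 = 1 := by linear_combination t_0_5_24 - h0 - h24
      have h11 : u11 = 0 := by linear_combination p_5_11 - u11 * h5
      have h12 : u12 = 0 := by linear_combination p_5_12 - u12 * h5
      have h22 : u22 = 0 := by linear_combination p_5_22 - u22 * h5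
      have h23 : u23 = 0 := by linear_combination p_5_23 - u23 * h5
      have h25 : u25 = 0 := by linear_combination p_5_25 - u25 * h5
      have h26 : u26 = 0 := by linear_combination p_5_26 - u26 * h5
      rcases hb2 with h2 | h2
      · -- u2 = 0
        have h4 : u4 = 1 := by linear_combination t_2_4_24 - h2 - h24
        have h19 : u19 = 0 := by linear_combination p_4_19 - u19 * h4
        have h29 : u29 = 0 := by linear_combination p_4_29 - u29 * h4
        have h27 : u27 = 1 := by linear_combination t_19_26_27 - h19 - h26
        have h21 : u21 = 1 := by linear_combination t_21_22_29 - h22 - h29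
        have h9 : u9 = 0 := by linear_combination p_9_27 - u9 * h27
        have h14 : u14 = 0 := by linear_combination p_14_21 - u14 * h21
        have h28 : u28 = 1 := by linear_combination t_0_9_28 - h0 - h9
        have h20 : u20 = 1 := by linear_combination t_0_14_20 - h0 - h14
        have h8 : u8 = 0 := by linear_combination p_8_28 - u8 * h28
        have h10 : u10 = 0 := by linear_combination p_10_28 - u10 * h28
        have h13 : u13 = 0 := by linear_combination p_13_20 - u13 * h20
        have h15 : u15 = 0 := by linear_combination p_15_20 - u15 * h20
        have h3 : u3 = 1 := by linear_combination t_3_8_15 - h8 - h15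
        have h7 : u7 = 1 := by linear_combination t_7_10_13 - h10 - h13
        exact one_ne_zero (by linear_combination p_3_7 - u7 * h3 - h7)
      · -- u2 = 1
        have h4 : u4 = 0 := by linear_combination p_2_4 - u4 * h2
        have h18 : u18 = 0 := by linear_combination p_2_18 - u18 * h2
        have h30 : u30 = 0 := by linear_combination p_2_30 - u30 * h2
        have h31 : u31 = 1 := by linear_combination t_16_18_31 - h16 - h18
        have h17 : u17 = 1 := by linear_combination t_17_30_32 - h30 - h32
        exact one_ne_zero (by linear_combination p_17_31 - u31 * h17 - h31)
  · -- u0 = 1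
    have h5 : u5 = 0 := by linear_combination p_0_5 - u5 * h0
    have h9 : u9 = 0 := by linear_combination p_0_9 - u9 * h0
    have h14 : u14 = 0 := by linear_combination p_0_14 - u14 * h0
    have h17 : u17 = 0 := by linear_combination p_0_17 - u17 * h0
    have h20 : u20 = 0 := by linear_combination p_0_20 - u20 * h0
    have h24 : u24 = 0 := by linear_combination p_0_24 - u24 * h0
    have h28 : u28 = 0 := by linear_combination p_0_28 - u28 * h0
    have h31 : u31 = 0 := by linear_combination p_0_31 - u31 * h0
    rcases hb1 with h1 | h1
    · -- u1 = 0
      have h6 : u6 = 1 := by linear_combination t_1_6_24 - h1 - h24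
      have h21 : u21 = 0 := by linear_combination p_6_21 - u21 * h6
      have h27 : u27 = 0 := by linear_combination p_6_27 - u27 * h6
      rcases hb2 with h2 | h2
      · -- u2 = 0
        have h4 : u4 = 1 := by linear_combination t_2_4_24 - h2 - h24
        have h19 : u19 = 0 := by linear_combination p_4_19 - u19 * h4
        have h29 : u29 = 0 := by linear_combination p_4_29 - u29 * h4
        have h26 : u26 = 1 := by linear_combination t_19_26_27 - h19 - h27
        have h22 : u22 = 1 := by linear_combination t_21_22_29 - h21 - h29
        exact one_ne_zero (by linear_combination p_22_26 - u26 * h22 - h26)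
      · -- u2 = 1
        have h4 : u4 = 0 := by linear_combination p_2_4 - u4 * h2
        have h18 : u18 = 0 := by linear_combination p_2_18 - u18 * h2
        have h30 : u30 = 0 := by linear_combination p_2_30 - u30 * h2
        have h16 : u16 = 1 := by linear_combination t_16_18_31 - h18 - h31
        have h32 : u32 = 1 := by linear_combination t_17_30_32 - h17 - h30
        have h11 : u11 = 0 := by linear_combination p_11_32 - u11 * h32
        have h12 : u12 = 0 := by linear_combination p_12_16 - u12 * h16
        have h25 : u25 = 1 := by linear_combination t_5_11_25 - h5 - h11
        have h23 : u23 = 1 := by linear_combination t_5_12_23 - h5 - h12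
        have h8 : u8 = 0 := by linear_combination p_8_25 - u8 * h25
        have h10 : u10 = 0 := by linear_combination p_10_23 - u10 * h23
        have h13 : u13 = 0 := by linear_combination p_13_25 - u13 * h25
        have h15 : u15 = 0 := by linear_combination p_15_23 - u15 * h23
        have h3 : u3 = 1 := by linear_combination t_3_8_15 - h8 - h15
        have h7 : u7 = 1 := by linear_combination t_7_10_13 - h10 - h13
        exact one_ne_zero (by linear_combination p_3_7 - u7 * h3 - h7)
    · -- u1 = 1
      have h6 : u6 = 0 := by linear_combination p_1_6 - u6 * h1
      have h16 : u16 = 0 := by linear_combination p_1_16 - u16 * h1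
      have h32 : u32 = 0 := by linear_combination p_1_32 - u32 * h1
      have h18 : u18 = 1 := by linear_combination t_16_18_31 - h16 - h31
      have h30 : u30 = 1 := by linear_combination t_17_30_32 - h17 - h32
      have h2 : u2 = 0 := by linear_combination p_2_18 - u2 * h18
      have h11 : u11 = 0 := by linear_combination p_11_18 - u11 * h18
      have h12 : u12 = 0 := by linear_combination p_12_30 - u12 * h30
      have h4 : u4 = 1 := by linear_combination t_2_4_24 - h2 - h24
      have h25 : u25 = 1 := by linear_combination t_5_11_25 - h5 - h11
      have h23 : u23 = 1 := by linear_combination t_5_12_23 - h5 - h12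
      have h19 : u19 = 0 := by linear_combination p_4_19 - u19 * h4
      have h29 : u29 = 0 := by linear_combination p_4_29 - u29 * h4
      have h8 : u8 = 0 := by linear_combination p_8_25 - u8 * h25
      have h10 : u10 = 0 := by linear_combination p_10_23 - u10 * h23
      have h13 : u13 = 0 := by linear_combination p_13_25 - u13 * h25
      have h15 : u15 = 0 := by linear_combination p_15_23 - u15 * h23
      have h3 : u3 = 1 := by linear_combination t_3_8_15 - h8 - h15
      have h7 : u7 = 1 := by linear_combination t_7_10_13 - h10 - h13
      exact one_ne_zero (by linear_combination p_3_7 - u7 * h3 - h7)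

/-- The Kochen–Specker theorem, C*-algebra colimit form: for `n ≥ 3`, any compatible family of
unital star-algebra homomorphisms from the commutative star-subalgebras of `M_n(ℂ)` to a
commutative C*-algebra `A` forces `A` to be trivial.  In other words, the colimit of the
diagram of commutative C*-subalgebras of `M_n(ℂ)`, taken in the category of commutative
C*-algebras, is the terminal (zero) C*-algebra. -/
theorem kochenSpecker_colimit_cstar (n : ℕ) (hn : 3 ≤ n)
    (A : Type*) [NormedCommRing A] [StarRing A] [CStarRing A]
    [NormedAlgebra ℂ A] [StarModule ℂ A] [CompleteSpace A]
    (φ : ∀ S : StarSubalgebra ℂ (Matrix (Fin n) (Fin n) ℂ),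
      (∀ a ∈ S, ∀ b ∈ S, a * b = b * a) → (S →⋆ₐ[ℂ] A))
    (hcompat : ∀ (S T : StarSubalgebra ℂ (Matrix (Fin n) (Fin n) ℂ))
      (hS : ∀ a ∈ S, ∀ b ∈ S, a * b = b * a) (hT : ∀ a ∈ T, ∀ b ∈ T, a * b = b * a)
      (hST : S ≤ T) (a : Matrix (Fin n) (Fin n) ℂ) (ha : a ∈ S),
      φ T hT ⟨a, hST ha⟩ = φ S hS ⟨a, ha⟩) :
    (0 : A) = 1 := by
  by_contra h0
  have hnt : Nontrivial A := ⟨⟨0, 1, h0⟩⟩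
  obtain ⟨χ⟩ : Nonempty (WeakDual.characterSpace ℂ A) := inferInstance
  obtain ⟨k, hk⟩ := KSu_std (φ := φ) χ hcompat
  have hex : ∃ q r : Fin n, k ≠ q ∧ k ≠ r ∧ q ≠ r := by
    have h3 : 3 ≤ n := hn
    set a : Fin n := ⟨0, by omega⟩ with ha
    set b : Fin n := ⟨1, by omega⟩ with hb
    set c : Fin n := ⟨2, by omega⟩ with hc
    have hab : a ≠ b := by simp [ha, hb, Fin.ext_iff]
    have hac : a ≠ c := by simp [ha, hc, Fin.ext_iff]
    have hbc : b ≠ c := by simp [hb, hc, Fin.ext_iff]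
    rcases eq_or_ne k a with rfl | hka
    · exact ⟨b, c, hab, hac, hbc⟩
    rcases eq_or_ne k b with rfl | hkb
    · exact ⟨a, c, hab.symm, hbc, hac⟩
    · exact ⟨a, b, hka, hkb, hab⟩
  obtain ⟨q, r, hkq, hkr, hqr⟩ := hex
  have hb0 := KSu_extv01 χ hcompat k q r hkq hkr hqr P0 (σ2_ne_zero _ (by decide) (by decide))
  have hb1 := KSu_extv01 χ hcompat k q r hkq hkr hqr P1 (σ2_ne_zero _ (by decide) (by decide))
  have hb2 := KSu_extv01 χ hcompat k q r hkq hkr hqr P2 (σ2_ne_zero _ (by decide) (by decide))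
  have hb3 := KSu_extv01 χ hcompat k q r hkq hkr hqr P3 (σ2_ne_zero _ (by decide) (by decide))
  have hb4 := KSu_extv01 χ hcompat k q r hkq hkr hqr P4 (σ2_ne_zero _ (by decide) (by decide))
  have hb5 := KSu_extv01 χ hcompat k q r hkq hkr hqr P5 (σ2_ne_zero _ (by decide) (by decide))
  have hb6 := KSu_extv01 χ hcompat k q r hkq hkr hqr P6 (σ2_ne_zero _ (by decide) (by decide))
  have hb7 := KSu_extv01 χ hcompat k q r hkq hkr hqr P7 (σ2_ne_zero _ (by decide) (by decide))
  have hb8 := KSu_extv01 χ hcompat k q r hkq hkr hqr P8 (σ2_ne_zero _ (by decide) (by decide))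
  have hb9 := KSu_extv01 χ hcompat k q r hkq hkr hqr P9 (σ2_ne_zero _ (by decide) (by decide))
  have hb10 := KSu_extv01 χ hcompat k q r hkq hkr hqr P10 (σ2_ne_zero _ (by decide) (by decide))
  have hb11 := KSu_extv01 χ hcompat k q r hkq hkr hqr P11 (σ2_ne_zero _ (by decide) (by decide))
  have hb12 := KSu_extv01 χ hcompat k q r hkq hkr hqr P12 (σ2_ne_zero _ (by decide) (by decide))
  have hb13 := KSu_extv01 χ hcompat k q r hkq hkr hqr P13 (σ2_ne_zero _ (by decide) (by decide))
  have hb14 := KSu_extv01 χ hcompat k q r hkq hkr hqr P14 (σ2_ne_zero _ (by decide) (by decide))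
  have hb15 := KSu_extv01 χ hcompat k q r hkq hkr hqr P15 (σ2_ne_zero _ (by decide) (by decide))
  have hb16 := KSu_extv01 χ hcompat k q r hkq hkr hqr P16 (σ2_ne_zero _ (by decide) (by decide))
  have hb17 := KSu_extv01 χ hcompat k q r hkq hkr hqr P17 (σ2_ne_zero _ (by decide) (by decide))
  have hb18 := KSu_extv01 χ hcompat k q r hkq hkr hqr P18 (σ2_ne_zero _ (by decide) (by decide))
  have hb19 := KSu_extv01 χ hcompat k q r hkq hkr hqr P19 (σ2_ne_zero _ (by decide) (by decide))
  have hb20 := KSu_extv01 χ hcompat k q r hkq hkr hqr P20 (σ2_ne_zero _ (by decide) (by decide))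
  have hb21 := KSu_extv01 χ hcompat k q r hkq hkr hqr P21 (σ2_ne_zero _ (by decide) (by decide))
  have hb22 := KSu_extv01 χ hcompat k q r hkq hkr hqr P22 (σ2_ne_zero _ (by decide) (by decide))
  have hb23 := KSu_extv01 χ hcompat k q r hkq hkr hqr P23 (σ2_ne_zero _ (by decide) (by decide))
  have hb24 := KSu_extv01 χ hcompat k q r hkq hkr hqr P24 (σ2_ne_zero _ (by decide) (by decide))
  have hb25 := KSu_extv01 χ hcompat k q r hkq hkr hqr P25 (σ2_ne_zero _ (by decide) (by decide))
  have hb26 := KSu_extv01 χ hcompat k q r hkq hkr hqr P26 (σ2_ne_zero _ (by decide) (by decide))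
  have hb27 := KSu_extv01 χ hcompat k q r hkq hkr hqr P27 (σ2_ne_zero _ (by decide) (by decide))
  have hb28 := KSu_extv01 χ hcompat k q r hkq hkr hqr P28 (σ2_ne_zero _ (by decide) (by decide))
  have hb29 := KSu_extv01 χ hcompat k q r hkq hkr hqr P29 (σ2_ne_zero _ (by decide) (by decide))
  have hb30 := KSu_extv01 χ hcompat k q r hkq hkr hqr P30 (σ2_ne_zero _ (by decide) (by decide))
  have hb31 := KSu_extv01 χ hcompat k q r hkq hkr hqr P31 (σ2_ne_zero _ (by decide) (by decide))
  have hb32 := KSu_extv01 χ hcompat k q r hkq hkr hqr P32 (σ2_ne_zero _ (by decide) (by decide))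
  have p_0_5 := KSu_pair χ hcompat k q r hkq hkr hqr P0 P5 (by decide)
  have p_0_9 := KSu_pair χ hcompat k q r hkq hkr hqr P0 P9 (by decide)
  have p_0_14 := KSu_pair χ hcompat k q r hkq hkr hqr P0 P14 (by decide)
  have p_0_17 := KSu_pair χ hcompat k q r hkq hkr hqr P0 P17 (by decide)
  have p_0_20 := KSu_pair χ hcompat k q r hkq hkr hqr P0 P20 (by decide)
  have p_0_24 := KSu_pair χ hcompat k q r hkq hkr hqr P0 P24 (by decide)
  have p_0_28 := KSu_pair χ hcompat k q r hkq hkr hqr P0 P28 (by decide)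
  have p_0_31 := KSu_pair χ hcompat k q r hkq hkr hqr P0 P31 (by decide)
  have p_1_6 := KSu_pair χ hcompat k q r hkq hkr hqr P1 P6 (by decide)
  have p_1_16 := KSu_pair χ hcompat k q r hkq hkr hqr P1 P16 (by decide)
  have p_1_24 := KSu_pair χ hcompat k q r hkq hkr hqr P1 P24 (by decide)
  have p_1_32 := KSu_pair χ hcompat k q r hkq hkr hqr P1 P32 (by decide)
  have p_2_4 := KSu_pair χ hcompat k q r hkq hkr hqr P2 P4 (by decide)
  have p_2_18 := KSu_pair χ hcompat k q r hkq hkr hqr P2 P18 (by decide)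
  have p_2_24 := KSu_pair χ hcompat k q r hkq hkr hqr P2 P24 (by decide)
  have p_2_30 := KSu_pair χ hcompat k q r hkq hkr hqr P2 P30 (by decide)
  have p_3_7 := KSu_pair χ hcompat k q r hkq hkr hqr P3 P7 (by decide)
  have p_3_8 := KSu_pair χ hcompat k q r hkq hkr hqr P3 P8 (by decide)
  have p_3_15 := KSu_pair χ hcompat k q r hkq hkr hqr P3 P15 (by decide)
  have p_3_24 := KSu_pair χ hcompat k q r hkq hkr hqr P3 P24 (by decide)
  have p_4_19 := KSu_pair χ hcompat k q r hkq hkr hqr P4 P19 (by decide)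
  have p_4_24 := KSu_pair χ hcompat k q r hkq hkr hqr P4 P24 (by decide)
  have p_4_29 := KSu_pair χ hcompat k q r hkq hkr hqr P4 P29 (by decide)
  have p_5_11 := KSu_pair χ hcompat k q r hkq hkr hqr P5 P11 (by decide)
  have p_5_12 := KSu_pair χ hcompat k q r hkq hkr hqr P5 P12 (by decide)
  have p_5_22 := KSu_pair χ hcompat k q r hkq hkr hqr P5 P22 (by decide)
  have p_5_23 := KSu_pair χ hcompat k q r hkq hkr hqr P5 P23 (by decide)
  have p_5_24 := KSu_pair χ hcompat k q r hkq hkr hqr P5 P24 (by decide)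
  have p_5_25 := KSu_pair χ hcompat k q r hkq hkr hqr P5 P25 (by decide)
  have p_5_26 := KSu_pair χ hcompat k q r hkq hkr hqr P5 P26 (by decide)
  have p_6_21 := KSu_pair χ hcompat k q r hkq hkr hqr P6 P21 (by decide)
  have p_6_24 := KSu_pair χ hcompat k q r hkq hkr hqr P6 P24 (by decide)
  have p_6_27 := KSu_pair χ hcompat k q r hkq hkr hqr P6 P27 (by decide)
  have p_7_10 := KSu_pair χ hcompat k q r hkq hkr hqr P7 P10 (by decide)
  have p_7_13 := KSu_pair χ hcompat k q r hkq hkr hqr P7 P13 (by decide)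
  have p_7_24 := KSu_pair χ hcompat k q r hkq hkr hqr P7 P24 (by decide)
  have p_8_15 := KSu_pair χ hcompat k q r hkq hkr hqr P8 P15 (by decide)
  have p_8_25 := KSu_pair χ hcompat k q r hkq hkr hqr P8 P25 (by decide)
  have p_8_28 := KSu_pair χ hcompat k q r hkq hkr hqr P8 P28 (by decide)
  have p_9_27 := KSu_pair χ hcompat k q r hkq hkr hqr P9 P27 (by decide)
  have p_9_28 := KSu_pair χ hcompat k q r hkq hkr hqr P9 P28 (by decide)
  have p_9_29 := KSu_pair χ hcompat k q r hkq hkr hqr P9 P29 (by decide)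
  have p_10_13 := KSu_pair χ hcompat k q r hkq hkr hqr P10 P13 (by decide)
  have p_10_23 := KSu_pair χ hcompat k q r hkq hkr hqr P10 P23 (by decide)
  have p_10_28 := KSu_pair χ hcompat k q r hkq hkr hqr P10 P28 (by decide)
  have p_11_18 := KSu_pair χ hcompat k q r hkq hkr hqr P11 P18 (by decide)
  have p_11_25 := KSu_pair χ hcompat k q r hkq hkr hqr P11 P25 (by decide)
  have p_11_32 := KSu_pair χ hcompat k q r hkq hkr hqr P11 P32 (by decide)
  have p_12_16 := KSu_pair χ hcompat k q r hkq hkr hqr P12 P16 (by decide)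
  have p_12_23 := KSu_pair χ hcompat k q r hkq hkr hqr P12 P23 (by decide)
  have p_12_30 := KSu_pair χ hcompat k q r hkq hkr hqr P12 P30 (by decide)
  have p_13_20 := KSu_pair χ hcompat k q r hkq hkr hqr P13 P20 (by decide)
  have p_13_25 := KSu_pair χ hcompat k q r hkq hkr hqr P13 P25 (by decide)
  have p_14_19 := KSu_pair χ hcompat k q r hkq hkr hqr P14 P19 (by decide)
  have p_14_20 := KSu_pair χ hcompat k q r hkq hkr hqr P14 P20 (by decide)
  have p_14_21 := KSu_pair χ hcompat k q r hkq hkr hqr P14 P21 (by decide)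
  have p_15_20 := KSu_pair χ hcompat k q r hkq hkr hqr P15 P20 (by decide)
  have p_15_23 := KSu_pair χ hcompat k q r hkq hkr hqr P15 P23 (by decide)
  have p_16_18 := KSu_pair χ hcompat k q r hkq hkr hqr P16 P18 (by decide)
  have p_16_31 := KSu_pair χ hcompat k q r hkq hkr hqr P16 P31 (by decide)
  have p_17_30 := KSu_pair χ hcompat k q r hkq hkr hqr P17 P30 (by decide)
  have p_17_31 := KSu_pair χ hcompat k q r hkq hkr hqr P17 P31 (by decide)
  have p_17_32 := KSu_pair χ hcompat k q r hkq hkr hqr P17 P32 (by decide)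
  have p_18_31 := KSu_pair χ hcompat k q r hkq hkr hqr P18 P31 (by decide)
  have p_19_26 := KSu_pair χ hcompat k q r hkq hkr hqr P19 P26 (by decide)
  have p_19_27 := KSu_pair χ hcompat k q r hkq hkr hqr P19 P27 (by decide)
  have p_21_22 := KSu_pair χ hcompat k q r hkq hkr hqr P21 P22 (by decide)
  have p_21_29 := KSu_pair χ hcompat k q r hkq hkr hqr P21 P29 (by decide)
  have p_22_26 := KSu_pair χ hcompat k q r hkq hkr hqr P22 P26 (by decide)
  have p_22_29 := KSu_pair χ hcompat k q r hkq hkr hqr P22 P29 (by decide)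
  have p_26_27 := KSu_pair χ hcompat k q r hkq hkr hqr P26 P27 (by decide)
  have p_30_32 := KSu_pair χ hcompat k q r hkq hkr hqr P30 P32 (by decide)
  have t_0_5_24 := KSu_triad χ hcompat k q r hkq hkr hqr P0 P5 P24 (by decide) (by decide) (by decide) (by decide) (by decide) (by decide) (σ2_ne_zero _ (by decide) (by decide)) (σ2_ne_zero _ (by decide) (by decide)) (σ2_ne_zero _ (by decide) (by decide)) hk
  have t_0_9_28 := KSu_triad χ hcompat k q r hkq hkr hqr P0 P9 P28 (by decide) (by decide) (by decide) (by decide) (by decide) (by decide) (σ2_ne_zero _ (by decide) (by decide)) (σ2_ne_zero _ (by decide) (by decide)) (σ2_ne_zero _ (by decide) (by decide)) hk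
  have t_0_14_20 := KSu_triad χ hcompat k q r hkq hkr hqr P0 P14 P20 (by decide) (by decide) (by decide) (by decide) (by decide) (by decide) (σ2_ne_zero _ (by decide) (by decide)) (σ2_ne_zero _ (by decide) (by decide)) (σ2_ne_zero _ (by decide) (by decide)) hk
  have t_0_17_31 := KSu_triad χ hcompat k q r hkq hkr hqr P0 P17 P31 (by decide) (by decide) (by decide) (by decide) (by decide) (by decide) (σ2_ne_zero _ (by decide) (by decide)) (σ2_ne_zero _ (by decide) (by decide)) (σ2_ne_zero _ (by decide) (by decide)) hk
  have t_1_6_24 := KSu_triad χ hcompat k q r hkq hkr hqr P1 P6 P24 (by decide) (by decide) (by decide) (by decide) (by decide) (by decide) (σ2_ne_zero _ (by decide) (by decide)) (σ2_ne_zero _ (by decide) (by decide)) (σ2_ne_zero _ (by decide) (by decide)) hk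
  have t_2_4_24 := KSu_triad χ hcompat k q r hkq hkr hqr P2 P4 P24 (by decide) (by decide) (by decide) (by decide) (by decide) (by decide) (σ2_ne_zero _ (by decide) (by decide)) (σ2_ne_zero _ (by decide) (by decide)) (σ2_ne_zero _ (by decide) (by decide)) hk
  have t_3_7_24 := KSu_triad χ hcompat k q r hkq hkr hqr P3 P7 P24 (by decide) (by decide) (by decide) (by decide) (by decide) (by decide) (σ2_ne_zero _ (by decide) (by decide)) (σ2_ne_zero _ (by decide) (by decide)) (σ2_ne_zero _ (by decide) (by decide)) hk
  have t_3_8_15 := KSu_triad χ hcompat k q r hkq hkr hqr P3 P8 P15 (by decide) (by decide) (by decide) (by decide) (by decide) (by decide) (σ2_ne_zero _ (by decide) (by decide)) (σ2_ne_zero _ (by decide) (by decide)) (σ2_ne_zero _ (by decide) (by decide)) hk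
  have t_5_11_25 := KSu_triad χ hcompat k q r hkq hkr hqr P5 P11 P25 (by decide) (by decide) (by decide) (by decide) (by decide) (by decide) (σ2_ne_zero _ (by decide) (by decide)) (σ2_ne_zero _ (by decide) (by decide)) (σ2_ne_zero _ (by decide) (by decide)) hk
  have t_5_12_23 := KSu_triad χ hcompat k q r hkq hkr hqr P5 P12 P23 (by decide) (by decide) (by decide) (by decide) (by decide) (by decide) (σ2_ne_zero _ (by decide) (by decide)) (σ2_ne_zero _ (by decide) (by decide)) (σ2_ne_zero _ (by decide) (by decide)) hk
  have t_5_22_26 := KSu_triad χ hcompat k q r hkq hkr hqr P5 P22 P26 (by decide) (by decide) (by decide) (by decide) (by decide) (by decide) (σ2_ne_zero _ (by decide) (by decide)) (σ2_ne_zero _ (by decide) (by decide)) (σ2_ne_zero _ (by decide) (by decide)) hk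
  have t_7_10_13 := KSu_triad χ hcompat k q r hkq hkr hqr P7 P10 P13 (by decide) (by decide) (by decide) (by decide) (by decide) (by decide) (σ2_ne_zero _ (by decide) (by decide)) (σ2_ne_zero _ (by decide) (by decide)) (σ2_ne_zero _ (by decide) (by decide)) hk
  have t_16_18_31 := KSu_triad χ hcompat k q r hkq hkr hqr P16 P18 P31 (by decide) (by decide) (by decide) (by decide) (by decide) (by decide) (σ2_ne_zero _ (by decide) (by decide)) (σ2_ne_zero _ (by decide) (by decide)) (σ2_ne_zero _ (by decide) (by decide)) hk
  have t_17_30_32 := KSu_triad χ hcompat k q r hkq hkr hqr P17 P30 P32 (by decide) (by decide) (by decide) (by decide) (by decide) (by decide) (σ2_ne_zero _ (by decide) (by decide)) (σ2_ne_zero _ (by decide) (by decide)) (σ2_ne_zero _ (by decide) (by decide)) hk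
  have t_19_26_27 := KSu_triad χ hcompat k q r hkq hkr hqr P19 P26 P27 (by decide) (by decide) (by decide) (by decide) (by decide) (by decide) (σ2_ne_zero _ (by decide) (by decide)) (σ2_ne_zero _ (by decide) (by decide)) (σ2_ne_zero _ (by decide) (by decide)) hk
  have t_21_22_29 := KSu_triad χ hcompat k q r hkq hkr hqr P21 P22 P29 (by decide) (by decide) (by decide) (by decide) (by decide) (by decide) (σ2_ne_zero _ (by decide) (by decide)) (σ2_ne_zero _ (by decide) (by decide)) (σ2_ne_zero _ (by decide) (by decide)) hk
  exact peres_false (KSu φ χ (extv k q r P0)) (KSu φ χ (extv k q r P1)) (KSu φ χ (extv k q r P2)) (KSu φ χ (extv k q r P3)) (KSu φ χ (extv k q r P4)) (KSu φ χ (extv k q r P5)) (KSu φ χ (extv k q r P6)) (KSu φ χ (extv k q r P7)) (KSu φ χ (extv k q r P8)) (KSu φ χ (extv k q r P9)) (KSu φ χ (extv k q r P10)) (KSu φ χ (extv k q r P11)) (KSu φ χ (extv k q r P12)) (KSu φ χ (extv k q r P13)) (KSu φ χ (extv k q r P14)) (KSu φ χ (extv k q r P15)) (KSu φ χ (extv k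 q r P16)) (KSu φ χ (extv k q r P17)) (KSu φ χ (extv k q r P18)) (KSu φ χ (extv k q r P19)) (KSu φ χ (extv k q r P20)) (KSu φ χ (extv k q r P21)) (KSu φ χ (extv k q r P22)) (KSu φ χ (extv k q r P23)) (KSu φ χ (extv k q r P24)) (KSu φ χ (extv k q r P25)) (KSu φ χ (extv k q r P26)) (KSu φ χ (extv k q r P27)) (KSu φ χ (extv k q r P28)) (KSu φ χ (extv k q r P29)) (KSu φ χ (extv k q r P30)) (KSu φ χ (extv k q r P31)) (KSu φ χ (extv k q r P32))
    hb0 hb1 hb2 hb3 hb4 hb5 hb6 hb7 hb8 hb9 hb10 hb11 hb12 hb13 hb14 hb15 hb16 hb17 hb18 hb19 hb20 hb21 hb22 hb23 hb24 hb25 hb26 hb27 hb28 hb29 hb30 hb31 hb32 p_0_5 p_0_9 p_0_14 p_0_17 p_0_20 p_0_24 p_0_28 p_0_31 p_1_6 p_1_16 p_1_24 p_1_32 p_2_4 p_2_18 p_2_24 p_2_30 p_3_7 p_3_8 p_3_15 p_3_24 p_4_19 p_4_24 p_4_29 p_5_11 p_5_12 p_5_22 p_5_23 p_5_24 p_5_25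 p_5_26 p_6_21 p_6_24 p_6_27 p_7_10 p_7_13 p_7_24 p_8_15 p_8_25 p_8_28 p_9_27 p_9_28 p_9_29 p_10_13 p_10_23 p_10_28 p_11_18 p_11_25 p_11_32 p_12_16 p_12_23 p_12_30 p_13_20 p_13_25 p_14_19 p_14_20 p_14_21 p_15_20 p_15_23 p_16_18 p_16_31 p_17_30 p_17_31 p_17_32 p_18_31 p_19_26 p_19_27 p_21_22 p_21_29 p_22_26 p_22_29 p_26_27 p_30_32 t_0_5_24 t_0_9_28 t_0_14_20 t_0_17_31 t_1_6_24 t_2_4_24 t_3_7_24 t_3_8_15 t_5_11_25 t_5_12_23 t_5_22_26 t_7_10_13 t_16_18_31 t_17_30_32 t_19_26_27 t_21_22_29
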